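/- arXiv:1311.4227 — 2 statements merged into one kernel-verified Lean document; each statement's English description precedes it below -/
import Mathlib

section
/- (Convergence of the subgradient price-update with stepsize 1/(k+1).) Let E be a finite-dimensional real inner product space, g : E → ℝ a convex function attaining its minimum at some point λ* ∈ E, and G ≥ 0. Let (λ_k)_{k≥0} be a sequence in E and (g_k)_{k≥0} a sequence of subgradients, i.e. for every k and every y ∈ E, g(y) ≥ g(λ_k) + ⟪g_k, y − λ_k⟫ and ‖g_k‖ ≤ G, with updates λ_{k+1} = λ_k − (1/(k+1)) g_k. Then the best objective value found converges to the minimum: lim_{n→∞} min_{0≤k≤n} g(λ_k) = g(λ*); equivalently inf_{k≥0} g(λ_k) = g(λ*). -/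
open Finset Filter

/-- **Convergence of the subgradient price-update with stepsize `1/(k+1)`.**
Let `E` be a finite-dimensional real inner product space, `g : E → ℝ` a convex
function attaining its minimum at `lamstar`, and `G ≥ 0`. If `gs k` is a
subgradient of `g` at `lam k` with `‖gs k‖ ≤ G` and
`lam (k+1) = lam k - (1/(k+1)) • gs k`, then the best objective value found so
far converges to the minimum: `min_{0 ≤ k ≤ n} g (lam k) → g lamstar`. -/
theorem subgradient_method_converges
    {E : Type} [NormedAddCommGroup E] [InnerProductSpace ℝ E]
    [FiniteDimensional ℝ E]
    (g : E → ℝ) (hg : ConvexOn ℝ Set.univ g)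
    (lamstar : E) (hmin : ∀ y, g lamstar ≤ g y)
    (G : ℝ) (hG : 0 ≤ G)
    (lam gs : ℕ → E)
    (hsubgrad : ∀ (k : ℕ) (y : E),
      g y ≥ g (lam k) + (inner ℝ (gs k) (y - lam k) : ℝ))
    (hbound : ∀ k, ‖gs k‖ ≤ G)
    (hupdate : ∀ k, lam (k + 1) = lam k - (1 / ((k : ℝ) + 1)) • gs k) :
    Filter.Tendsto
      (fun n => (Finset.range (n + 1)).inf' Finset.nonempty_range_add_one
        (fun k => g (lam k)))
      Filter.atTop (nhds (g lamstar)) := by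
  set α : ℕ → ℝ := fun k => 1 / ((k : ℝ) + 1) with hα
  have hαpos : ∀ k, 0 < α k := fun k => by positivity
  set D : ℕ → ℝ := fun k => g (lam k) - g lamstar with hD
  have hDnn : ∀ k, 0 ≤ D k := fun k => sub_nonneg.2 (hmin _)
  set e : ℕ → ℝ := fun k => ‖lam k - lamstar‖ ^ 2 with he
  have henn : ∀ k, 0 ≤ e k := fun k => by positivity
  -- one-step inequality
  have hstep : ∀ k, e (k + 1) + 2 * α k * D k ≤ e k + α k ^ 2 * G ^ 2 := by
    intro k
    have hx : lam (k + 1) - lamstar = (lam k - lamstar) - α k • gs k := by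
      rw [hupdate k]; abel
    have hexp : e (k + 1) =
        e k - 2 * (α k * inner ℝ (lam k - lamstar) (gs k)) + α k ^ 2 * ‖gs k‖ ^ 2 := by
      show ‖lam (k + 1) - lamstar‖ ^ 2 = _
      rw [hx, norm_sub_sq_real, real_inner_smul_right, norm_smul, mul_pow,
        Real.norm_eq_abs, sq_abs]
    have hkey : D k ≤ inner ℝ (lam k - lamstar) (gs k) := by
      have := hsubgrad k lamstar
      have h2 : (inner ℝ (gs k) (lamstar - lam k) : ℝ)
          = - inner ℝ (lam k - lamstar) (gs k) := by
        rw [real_inner_comm, ← inner_neg_left, neg_sub]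
      rw [h2] at this
      simp only [hD]; linarith
    have hG2 : ‖gs k‖ ^ 2 ≤ G ^ 2 := by
      have := hbound k
      nlinarith [norm_nonneg (gs k)]
    have hα2 : (0:ℝ) ≤ α k ^ 2 := sq_nonneg _
    nlinarith [hαpos k, mul_le_mul_of_nonneg_left hG2 hα2,
      mul_le_mul_of_nonneg_left hkey (le_of_lt (hαpos k))]
  -- summed inequality
  have hsum : ∀ n, e n + ∑ k ∈ range n, 2 * α k * D k
      ≤ e 0 + ∑ k ∈ range n, α k ^ 2 * G ^ 2 := by
    intro n
    induction n with
    | zero => simp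
    | succ n ih =>
        rw [sum_range_succ, sum_range_succ]
        have := hstep n
        linarith
  -- bound on the sum of squared stepsizes
  have hsq : ∀ n, ∑ k ∈ range n, α k ^ 2 ≤ 2 - 2 / ((n : ℝ) + 1) := by
    intro n
    induction n with
    | zero => simp
    | succ n ih =>
        rw [sum_range_succ]
        have ha : (0:ℝ) < (n : ℝ) + 1 := by positivity
        have hb : (0:ℝ) < (n : ℝ) + 1 + 1 := by positivity
        have key : α n ^ 2 ≤ 2 / ((n : ℝ) + 1) - 2 / ((n : ℝ) + 1 + 1) := by
          simp only [hα]
          rw [div_sub_div _ _ (ne_of_gt ha) (ne_of_gt hb), div_pow,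
            div_le_div_iff₀ (by positivity) (by positivity)]
          ring_nf
          nlinarith [sq_nonneg ((n:ℝ))]
        push_cast
        linarith
  set C : ℝ := (e 0 + 2 * G ^ 2) / 2 with hC
  have hCnn : 0 ≤ C := by
    have := henn 0
    simp only [hC]; positivity
  -- the running minimum
  set b : ℕ → ℝ := fun n => (Finset.range (n + 1)).inf' Finset.nonempty_range_add_one
        (fun k => g (lam k)) with hb
  set H : ℕ → ℝ := fun n => ∑ k ∈ range (n + 1), α k with hH
  have hHpos : ∀ n, 0 < H n := by
    intro n
    apply Finset.sum_pos (fun k _ => hαpos k) nonempty_range_add_one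
  have hbound2 : ∀ n, b n - g lamstar ≤ C / H n := by
    intro n
    rw [le_div_iff₀ (hHpos n)]
    have h1 : (b n - g lamstar) * H n ≤ ∑ k ∈ range (n + 1), α k * D k := by
      rw [hH]
      simp only
      rw [Finset.mul_sum]
      apply Finset.sum_le_sum
      intro k hk
      rw [mul_comm]
      apply mul_le_mul_of_nonneg_left _ (le_of_lt (hαpos k))
      have : b n ≤ g (lam k) := Finset.inf'_le _ hk
      simp only [hD]; linarith
    have h2 : ∑ k ∈ range (n + 1), α k * D k ≤ C := by
      have hs := hsum (n + 1)
      have hsq2 := hsq (n + 1)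
      have hG2 : ∑ k ∈ range (n + 1), α k ^ 2 * G ^ 2
          ≤ 2 * G ^ 2 := by
        rw [← Finset.sum_mul]
        push_cast at hsq2
        have hd : (0:ℝ) ≤ 2 / ((n : ℝ) + 1 + 1) := by positivity
        have h2' : ∑ k ∈ range (n + 1), α k ^ 2 ≤ 2 := by linarith
        nlinarith [h2', sq_nonneg G]
      have he1 := henn (n + 1)
      have : ∑ k ∈ range (n + 1), 2 * (α k * D k)
          = 2 * ∑ k ∈ range (n + 1), α k * D k := by
        rw [Finset.mul_sum]
      simp only [hC]
      have heq : ∑ k ∈ range (n + 1), 2 * α k * D k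
          = 2 * ∑ k ∈ range (n + 1), α k * D k := by
        rw [Finset.mul_sum]; apply Finset.sum_congr rfl; intros; ring
      rw [heq] at hs
      linarith
    linarith
  have hlow : ∀ n, 0 ≤ b n - g lamstar := by
    intro n
    have : g lamstar ≤ b n := by
      apply Finset.le_inf'
      intro k _
      exact hmin _
    linarith
  -- H n → ∞
  have hHtop : Tendsto H atTop atTop := by
    have h0 : Tendsto (fun n : ℕ => ∑ k ∈ range n, α k) atTop atTop := by
      simpa [hα] using Real.tendsto_sum_range_one_div_nat_succ_atTop
    exact h0.comp (tendsto_add_atTop_nat 1)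
  have hCH : Tendsto (fun n => C / H n) atTop (nhds 0) :=
    Tendsto.div_atTop tendsto_const_nhds hHtop
  have hmain : Tendsto (fun n => b n - g lamstar) atTop (nhds 0) := by
    apply tendsto_of_tendsto_of_tendsto_of_le_of_le tendsto_const_nhds hCH hlow hbound2
  have := hmain.add_const (g lamstar)
  simpa using this
end

section
/- (Optimality of foresighted policies under state-dependent prices with complementary slackness: no duality gap.) For a finite discounted MDP with resource-usage function f(s,a), let λ : S → ℝ satisfy λ(s) ≥ 0 for all s, and let V^λ : S → ℝ satisfy the penalized Bellman equation V^λ(s) = max_{a∈A(s)} [(1−δ)(u(s,a) − λ(s) f(s,a)) + δ ∑_{s'} p(s'|s,a) V^λ(s')]. Suppose the stationary policy π* satisfies: (i) π*(s) attains the maximum defining V^λ(s) at every state s; (ii) feasibility, f(s,π*(s)) ≤ 0 for all s; and (iii) complementary slackness, λ(s) f(s,π*(s)) = 0 for all s. Then the unpenalized policy value of π* equals the penalized optimal value, V_{π*}(s) = V^λ(s) for all s, and π* is optimal among feasible stationary policies: for every stationary policy π with f(s,π(s)) ≤ 0 for all s, V_{π*}(s) ≥ V_π(s) for every state s. -/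
lemma contraction_comparison {S : Type} [Fintype S] [Nonempty S]
    (δ : ℝ) (hδ0 : 0 ≤ δ) (hδ1 : δ < 1)
    (q : S → S → ℝ) (hq0 : ∀ s s', 0 ≤ q s s') (hq1 : ∀ s, ∑ s', q s s' = 1)
    (g : S → ℝ) (h : ∀ s, g s ≤ δ * ∑ s', q s s' * g s') : ∀ s, g s ≤ 0 := by
  obtain ⟨s0, hs0⟩ := Finite.exists_max g
  have key : ∑ s', q s0 s' * g s' ≤ g s0 := by
    calc ∑ s', q s0 s' * g s' ≤ ∑ s', q s0 s' * g s0 :=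
          Finset.sum_le_sum fun s' _ => mul_le_mul_of_nonneg_left (hs0 s') (hq0 s0 s')
      _ = (∑ s', q s0 s') * g s0 := by rw [Finset.sum_mul]
      _ = g s0 := by rw [hq1 s0, one_mul]
  have hg0 : g s0 ≤ 0 := by
    have := h s0
    nlinarith [mul_le_mul_of_nonneg_left key hδ0]
  exact fun s => (hs0 s).trans hg0



/-- **Optimality of foresighted policies under state-dependent prices with
complementary slackness: no duality gap.**
Suppose `Vlam` satisfies the Bellman equation of the MDP penalized with the
nonnegative state-dependent prices `lam`, and the stationary policy `πstar`
(i) attains the maximum defining `Vlam s` at every `s`, (ii) is feasible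
(`f s (πstar s) ≤ 0`), and (iii) satisfies complementary slackness
(`lam s * f s (πstar s) = 0`). Then the unpenalized policy value of `πstar`
equals `Vlam`, and `πstar` dominates every feasible stationary policy. -/
theorem no_duality_gap_state_dependent_prices
    {S A : Type} [Fintype S] [Nonempty S] [Fintype A]
    (Act : S → Finset A) (hAct : ∀ s, (Act s).Nonempty)
    (u f : S → A → ℝ) (p : S → A → S → ℝ)
    (hp0 : ∀ s a, a ∈ Act s → ∀ s', 0 ≤ p s a s')
    (hp1 : ∀ s a, a ∈ Act s → ∑ s', p s a s' = 1)
    (δ : ℝ) (hδ0 : 0 ≤ δ) (hδ1 : δ < 1)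
    (lam : S → ℝ) (hlam : ∀ s, 0 ≤ lam s)
    (Vlam : S → ℝ)
    (hVlam : ∀ s, Vlam s = (Act s).sup' (hAct s)
      (fun a => (1 - δ) * (u s a - lam s * f s a)
        + δ * ∑ s', p s a s' * Vlam s'))
    (πstar : S → A) (hπstar : ∀ s, πstar s ∈ Act s)
    (hGreedy : ∀ s, Vlam s
      = (1 - δ) * (u s (πstar s) - lam s * f s (πstar s))
        + δ * ∑ s', p s (πstar s) s' * Vlam s')
    (hfeas : ∀ s, f s (πstar s) ≤ 0)
    (hslack : ∀ s, lam s * f s (πstar s) = 0)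
    (Vπstar : S → ℝ)
    (hVπstar : ∀ s, Vπstar s
      = (1 - δ) * u s (πstar s) + δ * ∑ s', p s (πstar s) s' * Vπstar s') :
    (∀ s, Vπstar s = Vlam s) ∧
      (∀ (π : S → A), (∀ s, π s ∈ Act s) → (∀ s, f s (π s) ≤ 0) →
        ∀ (Vπ : S → ℝ),
          (∀ s, Vπ s = (1 - δ) * u s (π s) + δ * ∑ s', p s (π s) s' * Vπ s') →
          ∀ s, Vπ s ≤ Vπstar s) := by
  have hsum : ∀ (q : S → ℝ) (W V : S → ℝ),
      ∑ s', q s' * (W s' - V s') = (∑ s', q s' * W s') - ∑ s', q s' * V s' := by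
    intro q W V
    rw [← Finset.sum_sub_distrib]
    exact Finset.sum_congr rfl fun s' _ => by ring
  have hVl : ∀ s, Vlam s = (1 - δ) * u s (πstar s)
      + δ * ∑ s', p s (πstar s) s' * Vlam s' := by
    intro s
    rw [hGreedy s, hslack s]; ring
  have heq : ∀ s, Vπstar s - Vlam s
      = δ * ∑ s', p s (πstar s) s' * (Vπstar s' - Vlam s') := by
    intro s
    rw [hsum, mul_sub]
    have h1 := hVπstar s
    have h2 := hVl s
    linarith
  have hq0 : ∀ s s', 0 ≤ p s (πstar s) s' := fun s => hp0 s (πstar s) (hπstar s)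
  have hq1 : ∀ s, ∑ s', p s (πstar s) s' = 1 := fun s => hp1 s (πstar s) (hπstar s)
  have hle1 := contraction_comparison δ hδ0 hδ1 (fun s => p s (πstar s)) hq0 hq1
    (fun s => Vπstar s - Vlam s) (fun s => le_of_eq (heq s))
  have hle2 := contraction_comparison δ hδ0 hδ1 (fun s => p s (πstar s)) hq0 hq1
    (fun s => Vlam s - Vπstar s) (fun s => by
      have := heq s
      have : Vlam s - Vπstar s = δ * ∑ s', p s (πstar s) s' * (Vlam s' - Vπstar s') := by
        rw [hsum, mul_sub]
        rw [hsum, mul_sub] at this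
        linarith
      exact le_of_eq this)
  have hmain : ∀ s, Vπstar s = Vlam s := fun s => le_antisymm (by have h : Vπstar s - Vlam s ≤ 0 := hle1 s; linarith) (by have h : Vlam s - Vπstar s ≤ 0 := hle2 s; linarith)
  refine ⟨hmain, ?_⟩
  intro π hπ hfπ Vπ hVπ
  have hdom : ∀ s, Vπ s - Vlam s ≤ δ * ∑ s', p s (π s) s' * (Vπ s' - Vlam s') := by
    intro s
    have hle : (1 - δ) * (u s (π s) - lam s * f s (π s))
        + δ * ∑ s', p s (π s) s' * Vlam s' ≤ Vlam s := by
      rw [hVlam s]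
      exact Finset.le_sup' (fun a => (1 - δ) * (u s a - lam s * f s a)
        + δ * ∑ s', p s a s' * Vlam s') (hπ s)
    have hpen : lam s * f s (π s) ≤ 0 :=
      mul_nonpos_of_nonneg_of_nonpos (hlam s) (hfπ s)
    have hpen2 : (1 - δ) * (lam s * f s (π s)) ≤ 0 :=
      mul_nonpos_of_nonneg_of_nonpos (by linarith) hpen
    have h1 := hVπ s
    rw [hsum, mul_sub]
    nlinarith
  have hle3 := contraction_comparison δ hδ0 hδ1 (fun s => p s (π s))
    (fun s => hp0 s (π s) (hπ s)) (fun s => hp1 s (π s) (hπ s))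
    (fun s => Vπ s - Vlam s) hdom
  intro s
  have h1 : Vπ s - Vlam s ≤ 0 := hle3 s
  have h2 := hmain s
  linarith
end
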